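/- Fix complex numbers x, y, y', w, z and suppose the matrices X̃ = xI + 2yZ − X, Z̃ = zI − Z, and Ź = wI + (1−4yy')Z + 2y'X are all invertible. Then under the rank-one condition, (1 + aᵀŹ⁻¹X̃⁻¹b)·(1 + aᵀX̃⁻¹Z̃⁻¹b) = 1 + aᵀŹ⁻¹·((w+z+2xy')·X̃⁻¹ − 2y'·I − X̃⁻²)·Z̃⁻¹b. -/
import Mathlib


open Matrix

lemma aux_vecMulVec_mulVec {N : ℕ} (a b v : Fin N → ℂ) :
    (Matrix.vecMulVec b a).mulVec v = (a ⬝ᵥ v) • b := by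
  ext i
  simp [Matrix.mulVec, Matrix.vecMulVec_apply, dotProduct, Finset.mul_sum, mul_comm, mul_assoc,
    mul_left_comm]

lemma aux_key {N : ℕ} (a b : Fin N → ℂ) (M P : Matrix (Fin N) (Fin N) ℂ) :
    (a ⬝ᵥ M.mulVec b) * (a ⬝ᵥ P.mulVec b)
      = a ⬝ᵥ (M * Matrix.vecMulVec b a * P).mulVec b := by
  rw [Matrix.mul_assoc, ← Matrix.mulVec_mulVec, ← Matrix.mulVec_mulVec,
    aux_vecMulVec_mulVec, Matrix.mulVec_smul, dotProduct_smul, smul_eq_mul]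
  ring


/-- The key algebraic identity under the rank-one condition:
`(1 + aᵀŹ⁻¹X̃⁻¹b)·(1 + aᵀX̃⁻¹Z̃⁻¹b) = 1 + aᵀŹ⁻¹·((w+z+2xy')·X̃⁻¹ − 2y'·I − X̃⁻²)·Z̃⁻¹b`. -/
theorem rank_one_scalar_product_identity {N : ℕ} (hN : 0 < N)
    (X Z : Matrix (Fin N) (Fin N) ℂ) (a b : Fin N → ℂ)
    (hrank : X * Z - Z * X - 1 = Matrix.vecMulVec b a)
    (x y y' w z : ℂ)
    (hX : IsUnit (x • (1 : Matrix (Fin N) (Fin N) ℂ) + (2 * y) • Z - X))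
    (hZt : IsUnit (z • (1 : Matrix (Fin N) (Fin N) ℂ) - Z))
    (hZa : IsUnit (w • (1 : Matrix (Fin N) (Fin N) ℂ) + (1 - 4 * y * y') • Z + (2 * y') • X)) :
    (1 + a ⬝ᵥ ((w • (1 : Matrix (Fin N) (Fin N) ℂ) + (1 - 4 * y * y') • Z + (2 * y') • X)⁻¹
        * (x • 1 + (2 * y) • Z - X)⁻¹).mulVec b) *
    (1 + a ⬝ᵥ ((x • (1 : Matrix (Fin N) (Fin N) ℂ) + (2 * y) • Z - X)⁻¹
        * (z • 1 - Z)⁻¹).mulVec b)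
    = 1 + a ⬝ᵥ ((w • (1 : Matrix (Fin N) (Fin N) ℂ) + (1 - 4 * y * y') • Z + (2 * y') • X)⁻¹
        * ((w + z + 2 * x * y') • (x • (1 : Matrix (Fin N) (Fin N) ℂ) + (2 * y) • Z - X)⁻¹
            - (2 * y') • 1
            - (x • (1 : Matrix (Fin N) (Fin N) ℂ) + (2 * y) • Z - X)⁻¹
              * (x • 1 + (2 * y) • Z - X)⁻¹)
        * (z • 1 - Z)⁻¹).mulVec b := by
  set Xt : Matrix (Fin N) (Fin N) ℂ := x • (1 : Matrix (Fin N) (Fin N) ℂ) + (2 * y) • Z - X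
    with hXtdef
  set Zt : Matrix (Fin N) (Fin N) ℂ := z • (1 : Matrix (Fin N) (Fin N) ℂ) - Z with hZtdef
  set Za : Matrix (Fin N) (Fin N) ℂ :=
    w • (1 : Matrix (Fin N) (Fin N) ℂ) + (1 - 4 * y * y') • Z + (2 * y') • X with hZadef
  have hXd : IsUnit Xt.det := (Matrix.isUnit_iff_isUnit_det _).1 hX
  have hZtd : IsUnit Zt.det := (Matrix.isUnit_iff_isUnit_det _).1 hZt
  have hZad : IsUnit Za.det := (Matrix.isUnit_iff_isUnit_det _).1 hZa
  -- commutator of Xt and Zt equals commutator of X and Z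
  have hcomm : Xt * Zt - Zt * Xt - 1 = Matrix.vecMulVec b a := by
    rw [← hrank, hXtdef, hZtdef]
    simp only [Matrix.mul_sub, Matrix.sub_mul, Matrix.mul_add, Matrix.add_mul,
      Matrix.smul_mul, Matrix.mul_smul, smul_smul, Matrix.mul_one, Matrix.one_mul]
    module
  -- Za + Zt = (w+z+2xy') • 1 - (2y') • Xt
  have hsum : Za + Zt = (w + z + 2 * x * y') • (1 : Matrix (Fin N) (Fin N) ℂ) - (2 * y') • Xt := by
    rw [hZadef, hZtdef, hXtdef]
    module
  -- the central matrix identity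
  have hmat : Za⁻¹ * Xt⁻¹ + Xt⁻¹ * Zt⁻¹
      + Za⁻¹ * Xt⁻¹ * Matrix.vecMulVec b a * (Xt⁻¹ * Zt⁻¹)
      = Za⁻¹ * ((w + z + 2 * x * y') • Xt⁻¹ - (2 * y') • 1 - Xt⁻¹ * Xt⁻¹) * Zt⁻¹ := by
    rw [← hcomm]
    have e1 : Za⁻¹ * Xt⁻¹ * (Xt * Zt - Zt * Xt - 1) * (Xt⁻¹ * Zt⁻¹)
        = Za⁻¹ * (Zt * Xt⁻¹) * Zt⁻¹ - Za⁻¹ * Xt⁻¹ - Za⁻¹ * (Xt⁻¹ * Xt⁻¹) * Zt⁻¹ := by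
      simp only [Matrix.mul_sub, Matrix.sub_mul, Matrix.mul_one, Matrix.mul_assoc,
        Matrix.nonsing_inv_mul_cancel_left _ _ hXd, Matrix.mul_nonsing_inv_cancel_left _ _ hXd,
        Matrix.mul_nonsing_inv_cancel_left _ _ hZtd, Matrix.mul_nonsing_inv _ hZtd]
    rw [e1]
    have e2 : Za⁻¹ * ((w + z + 2 * x * y') • Xt⁻¹ - (2 * y') • 1 - Xt⁻¹ * Xt⁻¹) * Zt⁻¹
        = Za⁻¹ * (((w + z + 2 * x * y') • (1 : Matrix (Fin N) (Fin N) ℂ) - (2 * y') • Xt)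
            * Xt⁻¹) * Zt⁻¹ - Za⁻¹ * (Xt⁻¹ * Xt⁻¹) * Zt⁻¹ := by
      rw [Matrix.sub_mul, Matrix.smul_mul, Matrix.smul_mul, Matrix.one_mul,
        Matrix.mul_nonsing_inv _ hXd]
      simp only [Matrix.mul_sub, Matrix.sub_mul, Matrix.mul_one]
      try abel
    rw [e2, ← hsum]
    rw [Matrix.add_mul, Matrix.mul_add, Matrix.add_mul,
      Matrix.nonsing_inv_mul_cancel_left _ _ hZad]
    abel
  -- conclude
  rw [show (1 + a ⬝ᵥ (Za⁻¹ * Xt⁻¹).mulVec b) * (1 + a ⬝ᵥ (Xt⁻¹ * Zt⁻¹).mulVec b)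
      = 1 + ((a ⬝ᵥ (Za⁻¹ * Xt⁻¹).mulVec b) + (a ⬝ᵥ (Xt⁻¹ * Zt⁻¹).mulVec b)
        + (a ⬝ᵥ (Za⁻¹ * Xt⁻¹).mulVec b) * (a ⬝ᵥ (Xt⁻¹ * Zt⁻¹).mulVec b)) from by ring]
  rw [aux_key, ← dotProduct_add, ← dotProduct_add, ← Matrix.add_mulVec, ← Matrix.add_mulVec,
    hmat, Matrix.mul_assoc]
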